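/- Let G be a k-regular undirected connected graph with k ≥ 3 and let U = U(G) be the Grover transfer matrix. For arcs a, b ∈ A(G): (U²)_{ab} > 0 if and only if either a = b, or (t(b) is adjacent to o(a) in G, a ≠ b, o(a) ≠ o(b), and t(a) ≠ t(b)); and (U²)_{ab} < 0 if and only if a ≠ b and (o(a) = o(b) or t(a) = t(b)). -/

import Mathlib

open Matrix Polynomial

noncomputable section

variable {V : Type} [Fintype V] [DecidableEq V]

/-- The set of symmetric arcs of a simple graph `G`: ordered pairs of adjacent vertices. -/
abbrev GArc (G : SimpleGraph V) : Type := {p : V × V // G.Adj p.1 p.2}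

/-- The origin of an arc. -/
def arcO {G : SimpleGraph V} (a : GArc G) : V := a.1.1

/-- The terminus of an arc. -/
def arcT {G : SimpleGraph V} (a : GArc G) : V := a.1.2

/-- The inverse of an arc. -/
def arcInv {G : SimpleGraph V} (a : GArc G) : GArc G := ⟨(a.1.2, a.1.1), a.2.symm⟩

/-- The boundary matrix `K`, with `K_{v,a} = δ_{v,t(a)} / √(deg t(a))`. -/
def bdK (G : SimpleGraph V) [DecidableRel G.Adj] : Matrix V (GArc G) ℂ :=
  fun v a => if v = arcT a then ((1 / Real.sqrt (G.degree (arcT a)) : ℝ) : ℂ) else 0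

/-- The coin operator `C = 2K*K - I`. -/
def coinC (G : SimpleGraph V) [DecidableRel G.Adj] : Matrix (GArc G) (GArc G) ℂ :=
  (2 : ℂ) • ((bdK G)ᴴ * bdK G) - 1

/-- The shift operator `S`, with `S_{ab} = δ_{a,b⁻¹}`. -/
def shiftS (G : SimpleGraph V) : Matrix (GArc G) (GArc G) ℂ :=
  fun a b => if a = arcInv b then 1 else 0

/-- The perturbed shift `S_θ`, with `(S_θ)_{ab} = e^{iθ(b)} δ_{a,b⁻¹}`. -/
def shiftStheta (G : SimpleGraph V) (θ : GArc G → ℝ) : Matrix (GArc G) (GArc G) ℂ :=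
  fun a b => if a = arcInv b then Complex.exp ((θ b : ℂ) * Complex.I) else 0

/-- The Grover transfer matrix `U = SC`. -/
def groverU (G : SimpleGraph V) [DecidableRel G.Adj] : Matrix (GArc G) (GArc G) ℂ :=
  shiftS G * coinC G

/-- The transfer matrix `U_θ = S_θ C`. -/
def transferU (G : SimpleGraph V) [DecidableRel G.Adj] (θ : GArc G → ℝ) :
    Matrix (GArc G) (GArc G) ℂ :=
  shiftStheta G θ * coinC G

/-- The diagonal matrix `D_θ` with `(D_θ)_{ab} = e^{iθ(a)} δ_{ab}`. -/
def Dtheta (G : SimpleGraph V) (θ : GArc G → ℝ) : Matrix (GArc G) (GArc G) ℂ :=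
  Matrix.diagonal fun a => Complex.exp ((θ a : ℂ) * Complex.I)

/-- The positive support of a (real-valued) complex matrix. -/
def suppPos {α : Type} (M : Matrix α α ℂ) : Matrix α α ℂ :=
  fun a b => if 0 < (M a b).re then 1 else 0

/-- The negative support of a (real-valued) complex matrix. -/
def suppNeg {α : Type} (M : Matrix α α ℂ) : Matrix α α ℂ :=
  fun a b => if (M a b).re < 0 then 1 else 0

/-- The positive support of a real matrix. -/
def suppPosR {α : Type} (M : Matrix α α ℝ) : Matrix α α ℝ :=
  fun a b => if 0 < M a b then 1 else 0

/-- The negative support of a real matrix. -/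
def suppNegR {α : Type} (M : Matrix α α ℝ) : Matrix α α ℝ :=
  fun a b => if M a b < 0 then 1 else 0

/-- A digraph on `V`: an irreflexive (Boolean) arc relation. -/
structure Dgraph (V : Type) where
  adj : V → V → Bool
  loopless : ∀ v, adj v v = false

namespace Dgraph

/-- `(x,y)` is an arc of `D`. -/
def Adj (D : Dgraph V) (x y : V) : Prop := D.adj x y = true

instance (D : Dgraph V) : DecidableRel D.Adj := fun _ _ => by unfold Adj; infer_instance

/-- The underlying (undirected simple) graph `G^±`. -/
def underlying (D : Dgraph V) : SimpleGraph V where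
  Adj x y := D.Adj x y ∨ D.Adj y x
  symm := ⟨fun _ _ h => h.symm⟩
  loopless := ⟨fun v h => by
    rcases h with h | h <;> exact absurd h (by simp [Adj, D.loopless v])⟩

instance (D : Dgraph V) : DecidableRel D.underlying.Adj :=
  fun x y => inferInstanceAs (Decidable (D.Adj x y ∨ D.Adj y x))

/-- The transpose digraph `G⁻¹`. -/
def transpose (D : Dgraph V) : Dgraph V where
  adj x y := D.adj y x
  loopless := D.loopless

end Dgraph

/-- The `η`-function of a digraph `D`: `η` on `A∖A⁻¹`, `-η` on `A⁻¹∖A`, `0` on digons. -/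
def etaFun (D : Dgraph V) (η : ℝ) (a : GArc D.underlying) : ℝ :=
  if D.Adj (arcO a) (arcT a) then (if D.Adj (arcT a) (arcO a) then 0 else η) else -η

/-- The `η`-Hermitian adjacency matrix `H_η`. -/
def Heta (D : Dgraph V) (η : ℝ) : Matrix V V ℂ :=
  fun x y =>
    if D.Adj x y then (if D.Adj y x then 1 else Complex.exp ((η : ℂ) * Complex.I))
    else if D.Adj y x then Complex.exp (-(η : ℂ) * Complex.I) else 0

/-- The diagonal matrix `D^{-1/2}` of inverse square roots of degrees. -/
def degHalfInv (D : Dgraph V) : Matrix V V ℂ :=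
  Matrix.diagonal fun x => ((1 / Real.sqrt (D.underlying.degree x) : ℝ) : ℂ)

/-- The normalized `η`-Hermitian adjacency matrix `H̃_η = D^{-1/2} H_η D^{-1/2}`. -/
def normHeta (D : Dgraph V) (η : ℝ) : Matrix V V ℂ :=
  degHalfInv D * Heta D η * degHalfInv D

/-- The multiset of preimages of `μ` under `φ(z) = (z + z⁻¹)/2` on the unit circle:
the distinct roots of `z² - 2μz + 1`. -/
def phiInv (μ : ℂ) : Multiset ℂ :=
  ((X ^ 2 - Polynomial.C (2 * μ) * X + 1 : Polynomial ℂ).roots).dedup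

/-- A closed path in a graph: a nonempty chain of arcs returning to its start. -/
structure ClosedPath (G : SimpleGraph V) where
  arcs : List (GArc G)
  ne : arcs ≠ []
  chain : arcs.Chain' fun a b => arcT a = arcO b
  closed : arcT (arcs.getLast ne) = arcO (arcs.head ne)

/-- `ℐ(c) = Σ_j θ(a_j)` for a closed path `c`. -/
def pathSum {G : SimpleGraph V} (θ : GArc G → ℝ) (c : ClosedPath G) : ℝ :=
  (c.arcs.map θ).sum

/-- `x ∈ 2πℤ`. -/
def in2piZ (x : ℝ) : Prop := ∃ m : ℤ, x = 2 * Real.pi * m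

/-- `x ∈ 2π(ℤ + 1/2)`. -/
def in2piZhalf (x : ℝ) : Prop := ∃ m : ℤ, x = 2 * Real.pi * (m + 1 / 2)

/-- The matrix `F_t` with `(F_t)_{x,a} = δ_{x,t(a)}`. -/
def Ft (G : SimpleGraph V) : Matrix V (GArc G) ℂ := fun x a => if x = arcT a then 1 else 0

/-- The matrix `F_o` with `(F_o)_{x,a} = δ_{x,o(a)}`. -/
def Fo (G : SimpleGraph V) : Matrix V (GArc G) ℂ := fun x a => if x = arcO a then 1 else 0

/-- The 0/1 matrix `R` with `R_{ab} = 1` iff `m(a,b) = (t(b),o(a)) ∈ A(G) ∩ A(G)⁻¹`. -/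
def Rmat (D : Dgraph V) : Matrix (GArc D.underlying) (GArc D.underlying) ℂ :=
  fun a b => if D.Adj (arcT b) (arcO a) ∧ D.Adj (arcO a) (arcT b) then 1 else 0

/-- `U_θ^{(n,+)}`: the 0/1 matrix with `(a,b)` entry `1` iff `Re(D_θ U_θⁿ)_{ab} > 0`. -/
def suppPow (D : Dgraph V) (η : ℝ) (n : ℕ) :
    Matrix (GArc D.underlying) (GArc D.underlying) ℂ :=
  suppPos (Dtheta D.underlying (etaFun D η) * transferU D.underlying (etaFun D η) ^ n)

/-- `U_θ^{(n,−)}`: the 0/1 matrix with `(a,b)` entry `1` iff `Re(D_θ U_θⁿ)_{ab} < 0`. -/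
def suppPowNeg (D : Dgraph V) (η : ℝ) (n : ℕ) :
    Matrix (GArc D.underlying) (GArc D.underlying) ℂ :=
  suppNeg (Dtheta D.underlying (etaFun D η) * transferU D.underlying (etaFun D η) ^ n)

/-- The number of digons of a digraph. -/
def digonCount (D : Dgraph V) : ℕ :=
  (Finset.univ.filter fun p : V × V => D.Adj p.1 p.2 ∧ D.Adj p.2 p.1).card / 2

/-- The digraph `Y_{a,n-a}`: two complete (digon) blocks `[a]` and `[n]∖[a]`, with all
arcs from the first block to the second. -/
def Ydigraph (n a : ℕ) : Dgraph (Fin n) where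
  adj x y := decide ((x ≠ y) ∧
    ((x.val < a ∧ y.val < a) ∨ (a ≤ x.val ∧ a ≤ y.val) ∨ (x.val < a ∧ a ≤ y.val)))
  loopless := fun v => by simp

/-- The shift operator as a real matrix. -/
def shiftSR (G : SimpleGraph V) : Matrix (GArc G) (GArc G) ℝ :=
  fun a b => if a = arcInv b then 1 else 0

/-- The Grover transfer matrix as a real matrix, given by its entries
`U_{ab} = (2/deg t(b)) δ_{t(b),o(a)} − δ_{a⁻¹,b}`. -/
def groverEnt (G : SimpleGraph V) [DecidableRel G.Adj] : Matrix (GArc G) (GArc G) ℝ :=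
  fun a b => 2 / (G.degree (arcT b)) * (if arcT b = arcO a then 1 else 0)
    - (if arcInv a = b then 1 else 0)

private lemma arcInv_invol {G : SimpleGraph V} (a : GArc G) : arcInv (arcInv a) = a := rfl

private lemma arc_ext {G : SimpleGraph V} {a b : GArc G} (h1 : arcO a = arcO b)
    (h2 : arcT a = arcT b) : a = b := by
  apply Subtype.ext; apply Prod.ext; exacts [h1, h2]

private lemma grover_sq_entry {V : Type} [Fintype V] [DecidableEq V] (k : ℕ) (hk : 3 ≤ k)
    (G : SimpleGraph V) [DecidableRel G.Adj]
    (hreg : ∀ v, G.degree v = k) (a b : GArc G) :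
    (groverEnt G * groverEnt G) a b =
      (4 * (if G.Adj (arcT b) (arcO a) then (1:ℝ) else 0)
        - 2 * (k:ℝ) * ((if arcO a = arcO b then (1:ℝ) else 0)
            + (if arcT a = arcT b then (1:ℝ) else 0))
        + (k:ℝ)^2 * (if a = b then (1:ℝ) else 0)) / (k:ℝ)^2 := by
  have hEnt : ∀ (a b : GArc G), groverEnt G a b =
      2/(k:ℝ) * (if arcT b = arcO a then 1 else 0) - (if arcInv a = b then 1 else 0) := by
    intro a b; simp [groverEnt, hreg]
  have hmul : (groverEnt G * groverEnt G) a b =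
      ∑ c : GArc G, (2/(k:ℝ) * (if arcT c = arcO a then 1 else 0)
          - (if arcInv a = c then 1 else 0)) *
        (2/(k:ℝ) * (if arcT b = arcO c then 1 else 0) - (if arcInv c = b then 1 else 0)) := by
    rw [Matrix.mul_apply]; exact Finset.sum_congr rfl (fun c _ => by rw [hEnt, hEnt])
  have hsplit : ∀ c : GArc G,
      (2/(k:ℝ) * (if arcT c = arcO a then 1 else 0)
          - (if arcInv a = c then 1 else 0)) *
        (2/(k:ℝ) * (if arcT b = arcO c then 1 else 0) - (if arcInv c = b then 1 else 0))
      = (2/(k:ℝ))^2 * ((if arcT c = arcO a then 1 else 0) * (if arcT b = arcO c then 1 else 0))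
        - 2/(k:ℝ) * ((if arcInv a = c then (1:ℝ) else 0) * (if arcT b = arcO c then 1 else 0))
        - 2/(k:ℝ) * ((if arcT c = arcO a then (1:ℝ) else 0) * (if arcInv c = b then 1 else 0))
        + (if arcInv a = c then (1:ℝ) else 0) * (if arcInv c = b then 1 else 0) := by
    intro c; ring
  have hS1 : ∑ c : GArc G, (if arcT c = arcO a then (1:ℝ) else 0) *
      (if arcT b = arcO c then 1 else 0) = if G.Adj (arcT b) (arcO a) then 1 else 0 := by
    by_cases h : G.Adj (arcT b) (arcO a)
    · rw [if_pos h, Finset.sum_eq_single_of_mem (⟨(arcT b, arcO a), h⟩ : GArc G)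
        (Finset.mem_univ _)]
      · simp [arcT, arcO]
      · intro c _ hc
        rcases eq_or_ne (arcT c) (arcO a) with h1 | h1
        · rcases eq_or_ne (arcT b) (arcO c) with h2 | h2
          · refine absurd ?_ hc
            apply Subtype.ext; apply Prod.ext; exacts [h2.symm, h1]
          · simp [h2]
        · simp [h1]
    · rw [if_neg h, Finset.sum_eq_zero]
      intro c _
      rcases eq_or_ne (arcT c) (arcO a) with h1 | h1
      · rcases eq_or_ne (arcT b) (arcO c) with h2 | h2
        · exact absurd (h1 ▸ h2 ▸ c.2) h
        · simp [h2]
      · simp [h1]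
  have hS2 : ∑ c : GArc G, (if arcInv a = c then (1:ℝ) else 0) *
      (if arcT b = arcO c then 1 else 0) = if arcT a = arcT b then 1 else 0 := by
    rw [Finset.sum_eq_single_of_mem (arcInv a) (Finset.mem_univ _)]
    · simp [arcInv, arcO, arcT, eq_comm]; split_ifs <;> simp_all
    · intro c _ hc; simp [Ne.symm hc]
  have hS3 : ∑ c : GArc G, (if arcT c = arcO a then (1:ℝ) else 0) *
      (if arcInv c = b then 1 else 0) = if arcO a = arcO b then 1 else 0 := by
    rw [Finset.sum_eq_single_of_mem (arcInv b) (Finset.mem_univ _)]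
    · simp [arcInv, arcO, arcT, eq_comm]; split_ifs <;> simp_all
    · intro c _ hc
      have : arcInv c ≠ b := fun h => hc (by rw [← h, arcInv_invol])
      simp [this]
  have hS4 : ∑ c : GArc G, (if arcInv a = c then (1:ℝ) else 0) *
      (if arcInv c = b then 1 else 0) = if a = b then 1 else 0 := by
    rw [Finset.sum_eq_single_of_mem (arcInv a) (Finset.mem_univ _)]
    · rw [if_pos rfl, one_mul, arcInv_invol]
    · intro c _ hc; simp [Ne.symm hc]
  rw [hmul, Finset.sum_congr rfl (fun c _ => hsplit c)]
  rw [Finset.sum_add_distrib, Finset.sum_sub_distrib, Finset.sum_sub_distrib,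
    ← Finset.mul_sum, ← Finset.mul_sum, ← Finset.mul_sum, hS1, hS2, hS3, hS4]
  have hk0 : (k:ℝ) ≠ 0 := by exact_mod_cast (by omega : k ≠ 0)
  generalize (if G.Adj (arcT b) (arcO a) then (1:ℝ) else 0) = e1
  generalize (if arcO a = arcO b then (1:ℝ) else 0) = e2
  generalize (if arcT a = arcT b then (1:ℝ) else 0) = e3
  generalize (if a = b then (1:ℝ) else 0) = e4
  field_simp
  ring

/-- For a `k`-regular connected graph with `k ≥ 3`: `(U²)_{ab} > 0` iff `a = b` or
(`t(b) ∼ o(a)`, `a ≠ b`, `o(a) ≠ o(b)`, `t(a) ≠ t(b)`); and `(U²)_{ab} < 0` iff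
`a ≠ b` and (`o(a) = o(b)` or `t(a) = t(b)`). -/
theorem stmt12 {V : Type} [Fintype V] [DecidableEq V] (k : ℕ) (hk : 3 ≤ k)
    (G : SimpleGraph V) [DecidableRel G.Adj] (hconn : G.Connected)
    (hreg : ∀ v, G.degree v = k) (a b : GArc G) :
    (0 < (groverEnt G * groverEnt G) a b ↔
      a = b ∨ (G.Adj (arcT b) (arcO a) ∧ a ≠ b ∧ arcO a ≠ arcO b ∧ arcT a ≠ arcT b)) ∧
    ((groverEnt G * groverEnt G) a b < 0 ↔
      a ≠ b ∧ (arcO a = arcO b ∨ arcT a = arcT b)) := by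
  have hval := grover_sq_entry k hk G hreg a b
  have hκ3 : (3:ℝ) ≤ (k:ℝ) := by exact_mod_cast hk
  have hκpos : (0:ℝ) < (k:ℝ) := by linarith
  have hκ2 : (0:ℝ) < (k:ℝ)^2 := by positivity
  set num : ℝ := 4 * (if G.Adj (arcT b) (arcO a) then (1:ℝ) else 0)
      - 2 * (k:ℝ) * ((if arcO a = arcO b then (1:ℝ) else 0)
          + (if arcT a = arcT b then (1:ℝ) else 0))
      + (k:ℝ)^2 * (if a = b then (1:ℝ) else 0) with hnum
  have hpos : 0 < (groverEnt G * groverEnt G) a b ↔ 0 < num := by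
    rw [hval, lt_div_iff₀ hκ2, zero_mul]
  have hneg : (groverEnt G * groverEnt G) a b < 0 ↔ num < 0 := by
    rw [hval, div_lt_iff₀ hκ2, zero_mul]
  rw [hpos, hneg, hnum]
  by_cases hab : a = b
  · subst hab
    have hadj : G.Adj (arcT a) (arcO a) := a.2.symm
    simp only [hadj, eq_self_iff_true, if_true, ite_true]
    refine ⟨⟨fun _ => Or.inl trivial, fun _ => by nlinarith⟩,
      ⟨fun h => absurd h (by push_neg; nlinarith), fun h => absurd rfl h.1⟩⟩
  · have h0 : (0:ℝ) ≤ (if G.Adj (arcT b) (arcO a) then (1:ℝ) else 0) := by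
      split <;> norm_num
    have h1 : (if G.Adj (arcT b) (arcO a) then (1:ℝ) else 0) ≤ 1 := by
      split <;> norm_num
    by_cases hO : arcO a = arcO b
    · have hT : arcT a ≠ arcT b := fun h => hab (arc_ext hO h)
      rw [if_pos hO, if_neg hT, if_neg hab]
      constructor
      · constructor
        · intro h; exfalso; nlinarith
        · rintro (h | ⟨-, -, h, -⟩)
          · exact absurd h hab
          · exact absurd hO h
      · exact ⟨fun _ => ⟨hab, Or.inl hO⟩, fun _ => by nlinarith⟩
    · by_cases hT : arcT a = arcT b
      · rw [if_neg hO, if_pos hT, if_neg hab]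
        constructor
        · constructor
          · intro h; exfalso; nlinarith
          · rintro (h | ⟨-, -, -, h⟩)
            · exact absurd h hab
            · exact absurd hT h
        · exact ⟨fun _ => ⟨hab, Or.inr hT⟩, fun _ => by nlinarith⟩
      · rw [if_neg hO, if_neg hT, if_neg hab]
        constructor
        · constructor
          · intro h
            by_cases hadj : G.Adj (arcT b) (arcO a)
            · exact Or.inr ⟨hadj, hab, hO, hT⟩
            · exfalso; rw [if_neg hadj] at h; nlinarith
          · rintro (h | ⟨hadj, -, -, -⟩)
            · exact absurd h hab
            · rw [if_pos hadj]; nlinarith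
        · constructor
          · intro h; exfalso; nlinarith
          · rintro ⟨-, h | h⟩
            · exact absurd h hO
            · exact absurd h hT
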